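/- Let h be a continuously differentiable real function, suppose there exists a > 0 such that h(a) > 0, and suppose h satisfies: h'(x) ≤ 0 whenever h(x) > 0. Then h(x) ≥ h(a) for all x ≤ a. -/

import Mathlib

theorem stmt_0 (h : ℝ → ℝ) (hC1 : ContDiff ℝ 1 h) (a : ℝ) (ha : 0 < a)
    (hha : 0 < h a) (hder : ∀ x : ℝ, 0 < h x → deriv h x ≤ 0) :
    ∀ x : ℝ, x ≤ a → h a ≤ h x := by
  have hcont : Continuous h := hC1.continuous
  have hdiff : Differentiable ℝ h := hC1.differentiable one_ne_zero
  by_contra hcon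
  push_neg at hcon
  obtain ⟨x₀, hx₀a, hx₀⟩ := hcon
  set S : Set ℝ := {x | x ∈ Set.Icc x₀ a ∧ h x < h a} with hS
  have hx₀S : x₀ ∈ S := ⟨⟨le_rfl, hx₀a⟩, hx₀⟩
  have hSne : S.Nonempty := ⟨x₀, hx₀S⟩
  have hSbdd : BddAbove S := ⟨a, fun y hy => hy.1.2⟩
  set b := sSup S with hb
  have hbS_le : b ≤ a := csSup_le hSne fun y hy => hy.1.2
  have hx₀b : x₀ ≤ b := le_csSup hSbdd hx₀S
  -- h a ≤ h b
  have hhb : h a ≤ h b := by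
    rcases eq_or_lt_of_le hbS_le with heq | hlt
    · rw [heq]
    · have hIoc : ∀ y ∈ Set.Ioc b a, h a ≤ h y := by
        intro y hy
        by_contra hy'
        push_neg at hy'
        have : y ≤ b := le_csSup hSbdd ⟨⟨le_trans hx₀b hy.1.le, hy.2⟩, hy'⟩
        exact absurd hy.1 (not_lt.mpr this)
      have htend : Filter.Tendsto h (nhdsWithin b (Set.Ioi b)) (nhds (h b)) :=
        (hcont.continuousAt).continuousWithinAt
      have hne : (nhdsWithin b (Set.Ioi b)).NeBot := nhdsGT_neBot b
      refine ge_of_tendsto htend ?_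
      filter_upwards [Ioc_mem_nhdsGT_of_mem ⟨le_rfl, hlt⟩] with y hy using hIoc y hy
  have hbpos : 0 < h b := lt_of_lt_of_le hha hhb
  -- neighborhood where h > 0
  have hev : ∀ᶠ z in nhds b, 0 < h z :=
    ContinuousAt.eventually_lt continuousAt_const hcont.continuousAt hbpos
  obtain ⟨δ, hδ, hball⟩ := Metric.eventually_nhds_iff.mp hev
  have hpos : ∀ z ∈ Set.Icc (b - δ/2) b, 0 < h z := by
    intro z hz
    apply hball
    rw [Real.dist_eq, abs_lt]
    constructor <;> [linarith [hz.1]; linarith [hz.2]]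
  have hanti : AntitoneOn h (Set.Icc (b - δ/2) b) := by
    apply antitoneOn_of_deriv_nonpos (convex_Icc _ _) hcont.continuousOn
    · exact hdiff.differentiableOn
    · intro z hz
      rw [interior_Icc] at hz
      exact hder z (hpos z ⟨hz.1.le, hz.2.le⟩)
  obtain ⟨z, hzS, hzlt⟩ := exists_lt_of_lt_csSup hSne (by linarith : b - δ/2 < b)
  have hzb : z ≤ b := le_csSup hSbdd hzS
  have : h b ≤ h z := hanti ⟨hzlt.le, hzb⟩ ⟨by linarith, le_rfl⟩ hzb
  exact absurd hzS.2 (not_lt.mpr (le_trans hhb this))
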